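/- For any positive integer n and any complex number z with |z| < 1, the generating function of the multiple t-harmonic sums t*_n({2}^a) satisfies: sum over a ≥ 0 of t*_n({2}^a)·z^{2a} = product over k from 1 to n of (2k-1)^2/((2k-1)^2 - z^2), where t*_n({2}^a) = sum over n ≥ k_1 ≥ ... ≥ k_a ≥ 1 of 1/((2k_1-1)^2···(2k_a-1)^2), with t*_n of the empty index equal to 1. -/

import Mathlib

/-- The multiple `t`-harmonic star sum `t*_n({2}^a)`: the sum over weakly decreasing
tuples `n ≥ k₁ ≥ ⋯ ≥ k_a ≥ 1` of `1/((2k₁-1)²⋯(2k_a-1)²)`; equal to `1` when `a = 0`. -/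
noncomputable def tstarnTwo (n a : ℕ) : ℂ :=
  ∑ k ∈ Finset.filter (fun k : Fin a → ℕ => ∀ i j : Fin a, i ≤ j → k j ≤ k i)
      (Fintype.piFinset fun _ => Finset.Icc 1 n),
    ∏ i : Fin a, (1 : ℂ) / (2 * (k i : ℂ) - 1) ^ 2

open Finset

lemma tstar_zero (n : ℕ) : tstarnTwo n 0 = 1 := by simp [tstarnTwo]

lemma tstar_nil (a : ℕ) : tstarnTwo 0 (a+1) = 0 := by
  simp [tstarnTwo, Finset.Icc_eq_empty_of_lt]

lemma tstar_rec (n a : ℕ) :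
    tstarnTwo (n+1) (a+1) =
      tstarnTwo n (a+1) + (1 / (2 * ((n:ℂ)+1) - 1)^2) * tstarnTwo (n+1) a := by
  classical
  unfold tstarnTwo
  rw [← Finset.sum_filter_add_sum_filter_not
      (Finset.filter (fun k : Fin (a+1) → ℕ => ∀ i j : Fin (a+1), i ≤ j → k j ≤ k i)
        (Fintype.piFinset fun _ => Finset.Icc 1 (n+1))) (fun k => k 0 = n+1)]
  rw [add_comm]
  congr 1
  · -- the k 0 ≠ n+1 part equals tstarnTwo n (a+1)
    apply Finset.sum_congr
    · ext k
      simp only [Finset.mem_filter, Fintype.mem_piFinset, Finset.mem_Icc]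
      constructor
      · rintro ⟨⟨hpi, hdec⟩, hne⟩
        refine ⟨fun i => ⟨(hpi i).1, ?_⟩, hdec⟩
        have h0 := (hpi 0).2
        have : k 0 ≤ n := by omega
        exact le_trans (hdec 0 i (Fin.zero_le i)) this
      · rintro ⟨hpi, hdec⟩
        exact ⟨⟨fun i => ⟨(hpi i).1, le_trans (hpi i).2 (Nat.le_succ n)⟩, hdec⟩,
          by have := (hpi 0).2; omega⟩
    · intros; rfl
  · -- the k 0 = n+1 part
    rw [Finset.mul_sum]
    refine Finset.sum_bij' (fun k _ => Fin.tail k) (fun k' _ => Fin.cons (n+1) k')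
      ?_ ?_ ?_ ?_ ?_
    · rintro k hk
      simp only [Finset.mem_filter, Fintype.mem_piFinset] at hk ⊢
      obtain ⟨⟨hpi, hdec⟩, h0⟩ := hk
      exact ⟨fun i => hpi i.succ, fun i j hij => hdec i.succ j.succ (by simpa using hij)⟩
    · rintro k' hk'
      simp only [Finset.mem_filter, Fintype.mem_piFinset, Finset.mem_Icc] at hk' ⊢
      obtain ⟨hpi, hdec⟩ := hk'
      refine ⟨⟨?_, ?_⟩, by simp⟩
      · intro i
        refine i.cases ?_ ?_
        · simp
        · intro j; simpa using hpi j
      · intro i j hij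
        refine i.cases (fun hij => ?_) (fun i' hij => ?_) hij
        · refine j.cases ?_ ?_
          · simp
          · intro j'; simp; exact (hpi j').2
        · have hj : j ≠ 0 := by
            rintro rfl
            exact absurd (Fin.le_zero_iff.mp hij) (Fin.succ_ne_zero i')
          obtain ⟨j', rfl⟩ := Fin.exists_succ_eq.mpr hj
          simp only [Fin.cons_succ]
          exact hdec i' j' (by simpa using hij)
    · rintro k hk
      simp only [Finset.mem_filter] at hk
      have h := Fin.cons_self_tail k
      rw [hk.2] at h
      exact h
    · rintro k' _
      simp
    · rintro k hk
      simp only [Finset.mem_filter] at hk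
      rw [Fin.prod_univ_succ, hk.2]
      simp only [Fin.tail]
      push_cast
      ring

lemma tstar_conv (n a : ℕ) :
    tstarnTwo (n+1) a =
      ∑ p ∈ Finset.HasAntidiagonal.antidiagonal a,
        (1 / (2 * ((n:ℂ)+1) - 1)^2) ^ p.1 * tstarnTwo n p.2 := by
  induction a with
  | zero => simp [tstar_zero]
  | succ a ih =>
      rw [tstar_rec, ih, Finset.Nat.antidiagonal_succ, Finset.sum_cons, Finset.sum_map,
        Finset.mul_sum]
      simp only [Function.Embedding.coe_prodMap, Function.Embedding.coeFn_mk,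
        Function.Embedding.refl_apply, Prod.map_fst, Prod.map_snd]
      rw [pow_zero, one_mul]
      congr 1
      apply Finset.sum_congr rfl
      intro p _
      rw [Nat.succ_eq_add_one, pow_succ]
      ring

lemma main_aux (z : ℂ) (hz : ‖z‖ < 1) (n : ℕ) :
    Summable (fun a => ‖tstarnTwo n a * z ^ (2*a)‖) ∧
      ∑' a : ℕ, tstarnTwo n a * z ^ (2*a) =
        ∏ k ∈ Finset.Icc 1 n, (2*(k:ℂ)-1)^2 / ((2*(k:ℂ)-1)^2 - z^2) := by
  induction n with
  | zero =>
      constructor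
      · apply summable_of_ne_finset_zero (s := {0})
        intro b hb
        obtain ⟨b, rfl⟩ := Nat.exists_eq_succ_of_ne_zero (by simpa using hb)
        simp [tstar_nil]
      · rw [tsum_eq_single 0]
        · simp [tstar_zero]
        · intro b hb
          obtain ⟨b, rfl⟩ := Nat.exists_eq_succ_of_ne_zero hb
          simp [tstar_nil]
  | succ n ih =>
      obtain ⟨ihs, ihv⟩ := ih
      set c : ℂ := 1 / (2 * ((n:ℂ)+1) - 1)^2 with hc
      have hcnorm : ‖c‖ ≤ 1 := by
        rw [hc]
        have h1 : (2 * ((n:ℂ)+1) - 1) = ((2*n+1 : ℕ) : ℂ) := by push_cast; ring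
        rw [h1]
        simp only [one_div, norm_inv, norm_pow, Complex.norm_natCast]
        rw [inv_le_one_iff₀]
        right
        have : (1:ℝ) ≤ (2*n+1 : ℕ) := by exact_mod_cast Nat.le_add_left 1 (2*n)
        nlinarith
      have hzn : ‖z^2‖ < 1 := by
        rw [norm_pow]
        have : ‖z‖ < 1 := hz
        nlinarith [norm_nonneg z]
      have hcz : ‖c * z^2‖ < 1 := by
        rw [norm_mul]
        calc ‖c‖ * ‖z^2‖ ≤ 1 * ‖z^2‖ := by
              apply mul_le_mul_of_nonneg_right hcnorm (norm_nonneg _)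
          _ < 1 := by rwa [one_mul]
      have hgeo : Summable (fun j : ℕ => ‖(c * z^2)^j‖) := by
        simp only [norm_pow]
        exact summable_geometric_of_lt_one (norm_nonneg _) (by simpa using hcz)
      -- key rewriting of each term as an antidiagonal convolution
      have hterm : ∀ a : ℕ, tstarnTwo (n+1) a * z ^ (2*a) =
          ∑ p ∈ Finset.HasAntidiagonal.antidiagonal a, (c*z^2)^p.1 * (tstarnTwo n p.2 * z^(2*p.2)) := by
        intro a
        rw [tstar_conv, Finset.sum_mul]
        apply Finset.sum_congr rfl
        intro p hp
        have hpa : p.1 + p.2 = a := Finset.HasAntidiagonal.mem_antidiagonal.mp hp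
        rw [← hc, mul_pow, ← pow_mul, ← hpa, Nat.mul_add, pow_add]
        ring
      have hsum : Summable (fun a => ‖tstarnTwo (n+1) a * z ^ (2*a)‖) := by
        have h := summable_norm_sum_mul_antidiagonal_of_summable_norm
          (f := fun j => (c*z^2)^j) (g := fun l => tstarnTwo n l * z^(2*l)) hgeo ihs
        exact h.congr fun a => congrArg norm (hterm a).symm
      refine ⟨hsum, ?_⟩
      calc ∑' a : ℕ, tstarnTwo (n+1) a * z ^ (2*a)
          = ∑' a : ℕ, ∑ p ∈ Finset.HasAntidiagonal.antidiagonal a,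
              (c*z^2)^p.1 * (tstarnTwo n p.2 * z^(2*p.2)) := by
            exact tsum_congr hterm
        _ = (∑' j : ℕ, (c*z^2)^j) * (∑' l : ℕ, tstarnTwo n l * z^(2*l)) :=
            (tsum_mul_tsum_eq_tsum_sum_antidiagonal_of_summable_norm hgeo ihs).symm
        _ = (1 - c*z^2)⁻¹ * ∏ k ∈ Finset.Icc 1 n, (2*(k:ℂ)-1)^2 / ((2*(k:ℂ)-1)^2 - z^2) := by
            rw [tsum_geometric_of_norm_lt_one hcz, ihv]
        _ = ∏ k ∈ Finset.Icc 1 (n+1), (2*(k:ℂ)-1)^2 / ((2*(k:ℂ)-1)^2 - z^2) := by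
            rw [Finset.prod_Icc_succ_top (by omega)]
            rw [mul_comm]
            congr 1
            have hw : (2 * ((n+1:ℕ):ℂ) - 1)^2 ≠ 0 := by
              have : (2 * ((n+1:ℕ):ℂ) - 1) = ((2*n+1 : ℕ) : ℂ) := by push_cast; ring
              rw [this]
              exact pow_ne_zero 2 (Nat.cast_ne_zero.mpr (by omega))
            have hwz : (2 * ((n+1:ℕ):ℂ) - 1)^2 - z^2 ≠ 0 := by
              intro h
              have h2 : (2 * ((n+1:ℕ):ℂ) - 1)^2 = z^2 := by linear_combination h
              have : ‖(2 * ((n+1:ℕ):ℂ) - 1)^2‖ < 1 := h2 ▸ hzn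
              have h3 : (2 * ((n+1:ℕ):ℂ) - 1) = ((2*n+1 : ℕ) : ℂ) := by push_cast; ring
              rw [h3] at this
              simp only [norm_pow, Complex.norm_natCast] at this
              have h4 : (1:ℝ) ≤ (2*n+1 : ℕ) := by exact_mod_cast Nat.le_add_left 1 (2*n)
              nlinarith
            rw [hc]
            push_cast
            push_cast at hw hwz
            field_simp
            rw [one_sub_div hw, div_div_eq_mul_div, mul_div_cancel_left₀ _ hwz]

theorem generating_function_tstarn_twos (n : ℕ) (hn : 0 < n) (z : ℂ)
    (hz : ‖z‖ < 1) :
    ∑' a : ℕ, tstarnTwo n a * z ^ (2 * a) =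
      ∏ k ∈ Finset.Icc 1 n, (2 * (k : ℂ) - 1) ^ 2 / ((2 * (k : ℂ) - 1) ^ 2 - z ^ 2) := by
  exact (main_aux z hz n).2
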